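/- If S is a polyhedral subdivision of a polytope P, then the dual graph G^∨(S) is connected. -/

import Mathlib

open Set Module

/-- A polytope in ℝ^d: the convex hull of finitely many points. -/
def IsPolytope {d : ℕ} (P : Set (Fin d → ℝ)) : Prop :=
  ∃ V : Finset (Fin d → ℝ), P = convexHull ℝ (V : Set (Fin d → ℝ))

/-- A polyhedral subdivision of a set P ⊆ ℝ^d: a finite collection of nonempty
polytopes (the cells) covering P which meet face-to-face, i.e. the intersection
of any two cells is an (exposed) face of each of them. -/
structure Subdivision (d : ℕ) (P : Set (Fin d → ℝ)) where
  cells : Finset (Set (Fin d → ℝ))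
  poly : ∀ C ∈ cells, IsPolytope C
  cell_nonempty : ∀ C ∈ cells, C.Nonempty
  covers : ⋃₀ (cells : Set (Set (Fin d → ℝ))) = P
  faceToFace : ∀ C ∈ cells, ∀ C' ∈ cells, IsExposed ℝ C (C ∩ C')

/-- A maximal cell of a subdivision. -/
def Subdivision.IsMaxCell {d : ℕ} {P : Set (Fin d → ℝ)} (S : Subdivision d P)
    (C : Set (Fin d → ℝ)) : Prop :=
  C ∈ S.cells ∧ ∀ C' ∈ S.cells, C ⊆ C' → C = C'

/-- F is a facet (codimension-one face) of the polytope P. -/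
def IsFacet {d : ℕ} (P F : Set (Fin d → ℝ)) : Prop :=
  IsExposed ℝ P F ∧
    Module.finrank ℝ (vectorSpan ℝ F) + 1 = Module.finrank ℝ (vectorSpan ℝ P)

/-- Adjacency in the dual graph of a subdivision: two distinct maximal cells
sharing a codimension-one face. -/
def dualAdj {d : ℕ} {P : Set (Fin d → ℝ)} (S : Subdivision d P)
    (C C' : Set (Fin d → ℝ)) : Prop :=
  C ≠ C' ∧ IsFacet C (C ∩ C') ∧ IsFacet C' (C ∩ C')

/-- The dual graph of a subdivision, as a simple graph on the maximal cells. -/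
def dualGraph {d : ℕ} {P : Set (Fin d → ℝ)} (S : Subdivision d P) :
    SimpleGraph {C : Set (Fin d → ℝ) // S.IsMaxCell C} where
  Adj F G := dualAdj S F.1 G.1
  symm := by
    refine ⟨?_⟩
    rintro F G ⟨h1, h2, h3⟩
    exact ⟨fun h => h1 h.symm, by rwa [Set.inter_comm], by rwa [Set.inter_comm]⟩
  loopless := ⟨fun F h => h.1 rfl⟩



lemma lineMap_mem_of_two {V : Type*} [AddCommGroup V] [Module ℝ V]
    (S : AffineSubspace ℝ V) {p q : V} {t s : ℝ} (hts : t ≠ s)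
    (ht : AffineMap.lineMap p q t ∈ S) (hs : AffineMap.lineMap p q s ∈ S) (r : ℝ) :
    AffineMap.lineMap p q r ∈ S := by
  have key := AffineSubspace.smul_vsub_vadd_mem S ((r - t)/(s - t)) hs ht ht
  convert key using 1
  have hst : s - t ≠ 0 := sub_ne_zero.2 (Ne.symm hts)
  simp only [AffineMap.lineMap_apply_module, vsub_eq_sub, vadd_eq_add]
  match_scalars <;> field_simp <;> ring

lemma avoid_subspaces {V : Type*} [AddCommGroup V] [Module ℝ V] {W : Set V}
    (hW : Convex ℝ W) {α : Type*} (ι : Finset α) (A : α → AffineSubspace ℝ V)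
    (h : ∀ i ∈ ι, ¬ W ⊆ A i) (hne : W.Nonempty) : ∃ p ∈ W, ∀ i ∈ ι, p ∉ A i := by
  classical
  induction ι using Finset.induction_on with
  | empty => obtain ⟨p, hp⟩ := hne; exact ⟨p, hp, by simp⟩
  | @insert a ι ha ih =>
    obtain ⟨p, hpW, hp⟩ := ih (fun i hi => h i (Finset.mem_insert_of_mem hi))
    by_cases hpa : p ∉ A a
    · exact ⟨p, hpW, fun i hi => by
        rcases Finset.mem_insert.1 hi with rfl | hi
        exacts [hpa, hp i hi]⟩
    push_neg at hpa
    obtain ⟨q, hqW, hqa⟩ : ∃ q ∈ W, q ∉ A a := by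
      by_contra hcon; push_neg at hcon
      exact h a (Finset.mem_insert_self a ι) hcon
    -- bad parameters
    have hbad : ∀ i ∈ insert a ι, {t : ℝ | AffineMap.lineMap p q t ∈ A i}.Subsingleton := by
      intro i hi t htm s hsm
      by_contra hts
      rcases Finset.mem_insert.1 hi with rfl | hi
      · exact hqa (by simpa using lineMap_mem_of_two (A i) hts htm hsm 1)
      · exact hp i hi (by simpa using lineMap_mem_of_two (A i) hts htm hsm 0)
    have hfin : (⋃ i ∈ (insert a ι : Finset α),
        {t : ℝ | AffineMap.lineMap p q t ∈ A i}).Finite :=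
      Set.Finite.biUnion (Finset.finite_toSet _)
        (fun i hi => Set.Subsingleton.finite (hbad i hi))
    obtain ⟨t, htIoo, htbad⟩ :
        ∃ t, t ∈ Ioo (0:ℝ) 1 ∧ t ∉ (⋃ i ∈ (insert a ι : Finset α),
          {t : ℝ | AffineMap.lineMap p q t ∈ A i}) := by
      have : (Ioo (0:ℝ) 1 \ _).Nonempty :=
        Set.Infinite.nonempty ((Set.Ioo_infinite (by norm_num)).diff hfin)
      obtain ⟨t, ht⟩ := this
      exact ⟨t, ht.1, ht.2⟩
    refine ⟨AffineMap.lineMap p q t, ?_, ?_⟩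
    · have : AffineMap.lineMap p q t ∈ segment ℝ p q := by
        rw [segment_eq_image_lineMap]
        exact ⟨t, ⟨le_of_lt htIoo.1, le_of_lt htIoo.2⟩, rfl⟩
      exact hW.segment_subset hpW hqW this
    · intro i hi hmem
      exact htbad (Set.mem_biUnion hi hmem)


lemma exposed_finrank_lt {d : ℕ} {C F : Set (Fin d → ℝ)} (hF : IsExposed ℝ C F)
    (hne : F.Nonempty) (hFC : F ≠ C) :
    finrank ℝ (vectorSpan ℝ F) < finrank ℝ (vectorSpan ℝ C) := by
  obtain ⟨l, hl⟩ := hF hne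
  obtain ⟨x₀, hx₀F⟩ := hne
  have hx₀C : x₀ ∈ C := hF.subset hx₀F
  have hx₀max : ∀ y ∈ C, l y ≤ l x₀ := by
    have := hx₀F; rw [hl] at this; exact this.2
  obtain ⟨y, hyC, hyF⟩ : ∃ y ∈ C, y ∉ F := Set.exists_of_ssubset (ssubset_of_subset_of_ne hF.subset hFC)
  have hylt : l y < l x₀ := by
    rw [hl] at hyF
    simp only [mem_setOf_eq, not_and, not_forall] at hyF
    obtain ⟨z, hzC, hz⟩ := hyF hyC
    exact lt_of_lt_of_le (not_le.1 hz) (hx₀max z hzC)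
  -- F lies in the level set of l through x₀
  have hFker : vectorSpan ℝ F ≤ LinearMap.ker (l : (Fin d → ℝ) →ₗ[ℝ] ℝ) := by
    rw [← direction_affineSpan]
    have hsub : affineSpan ℝ F ≤ AffineSubspace.mk' x₀ (LinearMap.ker (l : (Fin d → ℝ) →ₗ[ℝ] ℝ) : Submodule ℝ (Fin d → ℝ)) := by
      rw [affineSpan_le]
      intro z hzF
      have hz1 : l z ≤ l x₀ := hx₀max z (hF.subset hzF)
      have hz2 : l x₀ ≤ l z := by
        have := hzF; rw [hl] at this; exact this.2 x₀ hx₀C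
      have : z ∈ AffineSubspace.mk' x₀ (LinearMap.ker (l : (Fin d → ℝ) →ₗ[ℝ] ℝ) : Submodule ℝ (Fin d → ℝ)) := by
        rw [AffineSubspace.mem_mk']
        simp only [LinearMap.mem_ker, vsub_eq_sub, ContinuousLinearMap.coe_coe, map_sub]
        linarith
      exact this
    calc (affineSpan ℝ F).direction ≤ _ := AffineSubspace.direction_le hsub
    _ = _ := AffineSubspace.direction_mk' _ _
  have hvC : y - x₀ ∈ vectorSpan ℝ C := by
    simpa [vsub_eq_sub] using vsub_mem_vectorSpan ℝ hyC hx₀C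
  have hvnotF : y - x₀ ∉ vectorSpan ℝ F := by
    intro hmem
    have := hFker hmem
    simp only [LinearMap.mem_ker, ContinuousLinearMap.coe_coe, map_sub] at this
    linarith
  exact Submodule.finrank_lt_finrank_of_lt
    (lt_of_le_of_ne (vectorSpan_mono ℝ hF.subset) (fun h => hvnotF (h ▸ hvC)))

lemma exists_forward {V : Type*} [NormedAddCommGroup V] [NormedSpace ℝ V]
    {C : Set V} {x y : V} (hx : x ∈ intrinsicInterior ℝ C) (hy : y ∈ C) :
    ∃ t : ℝ, 0 < t ∧ x + t • (x - y) ∈ C := by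
  obtain ⟨x', hx', hx'e⟩ := hx
  have hxA : x ∈ affineSpan ℝ C := hx'e ▸ x'.2
  have hyA : y ∈ affineSpan ℝ C := subset_affineSpan ℝ C hy
  have hmem : ∀ t : ℝ, x + t • (x - y) ∈ affineSpan ℝ C := by
    intro t
    have := AffineSubspace.smul_vsub_vadd_mem (affineSpan ℝ C) t hxA hyA hxA
    simpa [vsub_eq_sub, vadd_eq_add, add_comm] using this
  set g : ℝ → affineSpan ℝ C := fun t => ⟨x + t • (x - y), hmem t⟩ with hg
  have hgc : Continuous g := by
    apply Continuous.subtype_mk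
    exact continuous_const.add (continuous_id.smul continuous_const)
  have hg0 : g 0 = x' := by
    apply Subtype.ext
    simp [hg, hx'e]
  have hopen : IsOpen (g ⁻¹' interior (Subtype.val ⁻¹' C : Set (affineSpan ℝ C))) :=
    isOpen_interior.preimage hgc
  have h0mem : (0:ℝ) ∈ g ⁻¹' interior (Subtype.val ⁻¹' C) := by
    simp only [Set.mem_preimage, hg0]; exact hx'
  obtain ⟨δ, hδ, hball⟩ := Metric.isOpen_iff.1 hopen 0 h0mem
  refine ⟨δ/2, by positivity, ?_⟩
  have : g (δ/2) ∈ interior (Subtype.val ⁻¹' C) := hball (by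
    simp only [Metric.mem_ball, Real.dist_eq, sub_zero]
    rw [abs_of_pos (by positivity)]; linarith)
  have := interior_subset this
  exact this

section Structural
open Module
variable {d : ℕ} {P : Set (Fin d → ℝ)} (S : Subdivision d P)

lemma Subdivision.cell_convex {C : Set (Fin d → ℝ)} (hC : C ∈ S.cells) : Convex ℝ C := by
  obtain ⟨V, rfl⟩ := S.poly C hC; exact convex_convexHull ℝ _

lemma Subdivision.cell_closed {C : Set (Fin d → ℝ)} (hC : C ∈ S.cells) : IsClosed C := by
  obtain ⟨V, rfl⟩ := S.poly C hC
  exact (V.finite_toSet.isCompact_convexHull (𝕜 := ℝ)).isClosed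

lemma Subdivision.cell_subset {C : Set (Fin d → ℝ)} (hC : C ∈ S.cells) : C ⊆ P := by
  rw [← S.covers]; exact subset_sUnion_of_mem hC

lemma Subdivision.exists_maxCell_superset {C : Set (Fin d → ℝ)} (hC : C ∈ S.cells) :
    ∃ M, S.IsMaxCell M ∧ C ⊆ M := by
  classical
  have hfin : ({D ∈ (S.cells : Set (Set (Fin d → ℝ))) | C ⊆ D}).Finite :=
    (S.cells.finite_toSet).subset (sep_subset _ _)
  obtain ⟨M, hM, hMmax⟩ := Set.Finite.exists_maximalFor id _ hfin ⟨C, hC, subset_rfl⟩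
  refine ⟨M, ⟨hM.1, fun D hD hMD => ?_⟩, hM.2⟩
  exact le_antisymm hMD (hMmax ⟨hD, hM.2.trans hMD⟩ hMD)

lemma Subdivision.exists_maxCell_mem {x : Fin d → ℝ} (hx : x ∈ P) :
    ∃ M, S.IsMaxCell M ∧ x ∈ M := by
  rw [← S.covers] at hx
  obtain ⟨C, hC, hxC⟩ := hx
  obtain ⟨M, hM, hCM⟩ := S.exists_maxCell_superset hC
  exact ⟨M, hM, hCM hxC⟩

lemma Subdivision.maxCell_unique_relint {C D : Set (Fin d → ℝ)} (hC : S.IsMaxCell C)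
    {x : Fin d → ℝ} (hx : x ∈ intrinsicInterior ℝ C) (hD : D ∈ S.cells) (hxD : x ∈ D) :
    C = D := by
  have hexp : IsExposed ℝ C (C ∩ D) := S.faceToFace C hC.1 D hD
  have hxC : x ∈ C := intrinsicInterior_subset hx
  by_cases hface : C ∩ D = C
  · refine hC.2 D hD (fun z hz => ?_)
    rw [← hface] at hz; exact hz.2
  -- x relint point in proper exposed face : contradiction
  exfalso
  obtain ⟨l, hl⟩ := hexp ⟨x, hxC, hxD⟩
  have hxF : x ∈ C ∩ D := ⟨hxC, hxD⟩
  have hxmax : ∀ y ∈ C, l y ≤ l x := by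
    have := hxF; rw [hl] at this; exact this.2
  obtain ⟨y, hyC, hyF⟩ : ∃ y ∈ C, y ∉ C ∩ D :=
    Set.exists_of_ssubset (ssubset_of_subset_of_ne hexp.subset hface)
  have hylt : l y < l x := by
    rw [hl] at hyF
    simp only [Set.mem_setOf_eq, not_and, not_forall] at hyF
    obtain ⟨z, hzC, hz⟩ := hyF hyC
    have := hxmax z hzC
    have := not_le.1 hz
    linarith
  obtain ⟨t, ht, htC⟩ := exists_forward hx hyC
  have : l (x + t • (x - y)) ≤ l x := hxmax _ htC
  simp only [map_add, map_smul, map_sub, smul_eq_mul] at this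
  nlinarith

lemma Subdivision.maxCell_span (hPconv : Convex ℝ P) {C : Set (Fin d → ℝ)}
    (hC : S.IsMaxCell C) : affineSpan ℝ C = affineSpan ℝ P := by
  refine le_antisymm (affineSpan_mono ℝ (S.cell_subset hC.1)) ?_
  rw [affineSpan_le]
  intro y hyP
  obtain ⟨x, hx⟩ := (S.cell_nonempty C hC.1).intrinsicInterior (S.cell_convex hC.1)
  have hxC : x ∈ C := intrinsicInterior_subset hx
  -- the union of the other cells is closed and misses x
  set K : Set (Fin d → ℝ) := ⋃ D ∈ {D ∈ (S.cells : Set (Set (Fin d → ℝ))) | D ≠ C}, D with hK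
  have hKclosed : IsClosed K :=
    Set.Finite.isClosed_biUnion ((S.cells.finite_toSet).subset (sep_subset _ _))
      (fun D hD => S.cell_closed hD.1)
  have hxK : x ∉ K := by
    intro hmem
    rw [Set.mem_iUnion₂] at hmem
    obtain ⟨D, hD, hxD⟩ := hmem
    exact hD.2 (S.maxCell_unique_relint hC hx hD.1 hxD).symm
  obtain ⟨ε, hε, hball⟩ := Metric.isOpen_iff.1 hKclosed.isOpen_compl x hxK
  -- walk slightly from x towards y inside P
  by_cases hxy : y = x
  · exact hxy ▸ subset_affineSpan ℝ C hxC
  set t : ℝ := min 1 (ε / (2 * dist y x)) with htdef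
  have hdist : 0 < dist y x := dist_pos.2 hxy
  have ht0 : 0 < t := lt_min one_pos (by positivity)
  have ht1 : t ≤ 1 := min_le_left _ _
  set z : Fin d → ℝ := x + t • (y - x) with hz
  have hzP : z ∈ P := by
    have : z ∈ segment ℝ x y := by
      rw [segment_eq_image_lineMap]
      exact ⟨t, ⟨le_of_lt ht0, ht1⟩, by simp [AffineMap.lineMap_apply_module, hz]; module⟩
    exact hPconv.segment_subset (S.cell_subset hC.1 hxC) hyP this
  have hzball : z ∈ Metric.ball x ε := by
    simp only [hz, Metric.mem_ball]
    have : dist (x + t • (y - x)) x = t * dist y x := by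
      rw [dist_eq_norm, add_sub_cancel_left, norm_smul, Real.norm_eq_abs, abs_of_pos ht0,
        dist_eq_norm]
    rw [this]
    calc t * dist y x ≤ (ε / (2 * dist y x)) * dist y x := by
          apply mul_le_mul_of_nonneg_right (min_le_right _ _) dist_nonneg
    _ = ε / 2 := by field_simp
    _ < ε := by linarith
  have hzC : z ∈ C := by
    rw [← S.covers] at hzP
    obtain ⟨D, hD, hzD⟩ := hzP
    by_cases hDC : D = C
    · exact hDC ▸ hzD
    · exact absurd (hball hzball) (by
        simp only [Set.mem_compl_iff, not_not]
        exact Set.mem_biUnion (⟨hD, hDC⟩ : D ∈ {D ∈ (S.cells : Set (Set (Fin d → ℝ))) | D ≠ C}) hzD)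
  -- recover y from x and z
  have : y = (1/t) • (z -ᵥ x) +ᵥ x := by
    simp only [hz, vsub_eq_sub, vadd_eq_add, add_sub_cancel_left, smul_smul]
    rw [one_div_mul_cancel (ne_of_gt ht0), one_smul]
    abel
  rw [this]
  exact AffineSubspace.smul_vsub_vadd_mem _ _ (subset_affineSpan ℝ C hzC)
    (subset_affineSpan ℝ C hxC) (subset_affineSpan ℝ C hxC)

end Structural

/-- The dual graph of a subdivision of a polytope is connected. -/
theorem dualGraph_connected {d : ℕ} {P : Set (Fin d → ℝ)} (hP : IsPolytope P)
    (hPne : P.Nonempty) (S : Subdivision d P) :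
    (dualGraph S).Connected := by
  classical
  obtain ⟨x₀, hx₀⟩ := hPne
  obtain ⟨M₀, hM₀, -⟩ := S.exists_maxCell_mem hx₀
  haveI : Nonempty {C : Set (Fin d → ℝ) // S.IsMaxCell C} := ⟨⟨M₀, hM₀⟩⟩
  have hPconv : Convex ℝ P := by obtain ⟨V, rfl⟩ := hP; exact convex_convexHull ℝ _
  set n := finrank ℝ (vectorSpan ℝ P) with hn
  have hrank : ∀ C, S.IsMaxCell C → finrank ℝ (vectorSpan ℝ C) = n := by
    intro C hC
    rw [hn, ← direction_affineSpan, ← direction_affineSpan, S.maxCell_span hPconv hC]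
  refine ⟨fun u v => ?_⟩
  obtain ⟨C, hC⟩ := u
  obtain ⟨C', hC'⟩ := v
  by_cases hCC' : C = C'
  · subst hCC'
    exact SimpleGraph.Reachable.refl _
  -- n ≥ 1
  have hn1 : 1 ≤ n := by
    by_contra hcon
    have hn0 : finrank ℝ (vectorSpan ℝ P) = 0 := by omega
    have hbot : vectorSpan ℝ P = ⊥ := Submodule.finrank_eq_zero.1 hn0
    have hsub : ∀ a ∈ P, ∀ b ∈ P, a = b := by
      intro a ha b hb
      have hmem : a -ᵥ b ∈ vectorSpan ℝ P := vsub_mem_vectorSpan ℝ ha hb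
      rw [hbot] at hmem
      have : a - b = 0 := by simpa [vsub_eq_sub] using hmem
      exact sub_eq_zero.1 this
    exact hCC' (by
      apply Set.eq_of_subset_of_subset
      · intro z hz
        obtain ⟨c', hc'⟩ := S.cell_nonempty C' hC'.1
        have := hsub z (S.cell_subset hC.1 hz) c' (S.cell_subset hC'.1 hc')
        exact this ▸ hc'
      · intro z hz
        obtain ⟨c, hc⟩ := S.cell_nonempty C hC.1
        have := hsub z (S.cell_subset hC'.1 hz) c (S.cell_subset hC.1 hc)
        exact this ▸ hc)
  -- rank of intersections of distinct maximal cells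
  have hinterlt : ∀ D D', S.IsMaxCell D → S.IsMaxCell D' → D ≠ D' →
      finrank ℝ (vectorSpan ℝ (D ∩ D')) < n := by
    intro D D' hD hD' hne
    rcases (D ∩ D').eq_empty_or_nonempty with h | h
    · rw [h, vectorSpan_empty]
      simpa using (show 0 < n by omega)
    · have hface : IsExposed ℝ D (D ∩ D') := S.faceToFace D hD.1 D' hD'.1
      have hproper : D ∩ D' ≠ D := by
        intro heq
        refine hne (hD.2 D' hD'.1 (fun z hz => ?_))
        rw [← heq] at hz; exact hz.2
      have := exposed_finrank_lt hface h hproper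
      rwa [hrank D hD] at this
  have hnotsub : ∀ (E : Set (Fin d → ℝ)), S.IsMaxCell E →
      ∀ (A : AffineSubspace ℝ (Fin d → ℝ)), finrank ℝ A.direction < n → ¬ (E ⊆ A) := by
    intro E hE A hA hsubA
    have h2 : vectorSpan ℝ E ≤ A.direction := by
      rw [← direction_affineSpan]
      exact AffineSubspace.direction_le (affineSpan_le.2 hsubA)
    have := Submodule.finrank_mono h2
    rw [hrank E hE] at this
    omega
  have hnotbot : ∀ (E : Set (Fin d → ℝ)), E.Nonempty →
      ¬ E ⊆ ((⊥ : AffineSubspace ℝ (Fin d → ℝ)) : Set (Fin d → ℝ)) := by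
    intro E hE hsubA
    obtain ⟨e, he⟩ := hE
    simpa using hsubA he
  -- choose a generic point p in C
  set A₁ : Set (Fin d → ℝ) × Set (Fin d → ℝ) → AffineSubspace ℝ (Fin d → ℝ) :=
    fun i => if h : S.IsMaxCell i.1 ∧ S.IsMaxCell i.2 ∧ i.1 ≠ i.2
      then affineSpan ℝ (i.1 ∩ i.2) else ⊥ with hA₁
  have hA₁pos : ∀ i, S.IsMaxCell i.1 ∧ S.IsMaxCell i.2 ∧ i.1 ≠ i.2 →
      A₁ i = affineSpan ℝ (i.1 ∩ i.2) := by
    intro i h; rw [hA₁]; exact dif_pos h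
  have hA₁neg : ∀ i, ¬(S.IsMaxCell i.1 ∧ S.IsMaxCell i.2 ∧ i.1 ≠ i.2) → A₁ i = ⊥ := by
    intro i h; rw [hA₁]; exact dif_neg h
  have hA₁rank : ∀ i, finrank ℝ (A₁ i).direction < n ∨ A₁ i = ⊥ := by
    intro i
    by_cases h : S.IsMaxCell i.1 ∧ S.IsMaxCell i.2 ∧ i.1 ≠ i.2
    · left
      rw [hA₁pos i h, direction_affineSpan]
      exact hinterlt i.1 i.2 h.1 h.2.1 h.2.2
    · right; exact hA₁neg i h
  obtain ⟨p, hpC, hp⟩ := avoid_subspaces (S.cell_convex hC.1) (S.cells ×ˢ S.cells) A₁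
    (by
      intro i _
      rcases hA₁rank i with h | h
      · exact hnotsub C hC _ h
      · rw [h]; exact hnotbot C (S.cell_nonempty C hC.1))
    (S.cell_nonempty C hC.1)
  have hp' : ∀ D D' : Set (Fin d → ℝ), S.IsMaxCell D → S.IsMaxCell D' → D ≠ D' →
      p ∉ affineSpan ℝ (D ∩ D') := by
    intro D D' hD hD' hne
    have h2 := hp (D, D') (Finset.mem_product.2 ⟨hD.1, hD'.1⟩)
    rw [hA₁pos (D, D') ⟨hD, hD', hne⟩] at h2
    exact h2
  -- choose a generic point q in C'
  set A₂ : Set (Fin d → ℝ) × Set (Fin d → ℝ) → AffineSubspace ℝ (Fin d → ℝ) :=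
    fun i => if h : S.IsMaxCell i.1 ∧ S.IsMaxCell i.2 ∧ i.1 ≠ i.2 ∧
        finrank ℝ (vectorSpan ℝ (i.1 ∩ i.2)) + 1 < n
      then affineSpan ℝ (insert p (i.1 ∩ i.2)) else ⊥ with hA₂
  have hA₂pos : ∀ i, (S.IsMaxCell i.1 ∧ S.IsMaxCell i.2 ∧ i.1 ≠ i.2 ∧
      finrank ℝ (vectorSpan ℝ (i.1 ∩ i.2)) + 1 < n) →
      A₂ i = affineSpan ℝ (insert p (i.1 ∩ i.2)) := by
    intro i h; rw [hA₂]; exact dif_pos h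
  have hA₂neg : ∀ i, ¬(S.IsMaxCell i.1 ∧ S.IsMaxCell i.2 ∧ i.1 ≠ i.2 ∧
      finrank ℝ (vectorSpan ℝ (i.1 ∩ i.2)) + 1 < n) → A₂ i = ⊥ := by
    intro i h; rw [hA₂]; exact dif_neg h
  obtain ⟨q, hqC', hq⟩ := avoid_subspaces (S.cell_convex hC'.1)
    ((S.cells ×ˢ S.cells).disjSum (S.cells ×ˢ S.cells)) (Sum.elim A₁ A₂)
    (by
      rintro (i | i) _
      · rcases hA₁rank i with h | h
        · exact hnotsub C' hC' _ h
        · simp only [Sum.elim_inl]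
          rw [h]; exact hnotbot C' (S.cell_nonempty C' hC'.1)
      · simp only [Sum.elim_inr]
        by_cases h : S.IsMaxCell i.1 ∧ S.IsMaxCell i.2 ∧ i.1 ≠ i.2 ∧
            finrank ℝ (vectorSpan ℝ (i.1 ∩ i.2)) + 1 < n
        · rw [hA₂pos i h]
          apply hnotsub C' hC'
          rw [direction_affineSpan]
          calc finrank ℝ (vectorSpan ℝ (insert p (i.1 ∩ i.2)))
              ≤ finrank ℝ (vectorSpan ℝ (i.1 ∩ i.2)) + 1 :=
                finrank_vectorSpan_insert_le_set ℝ _ _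
            _ < n := h.2.2.2
        · rw [hA₂neg i h]; exact hnotbot C' (S.cell_nonempty C' hC'.1))
    (S.cell_nonempty C' hC'.1)
  have hq1 : ∀ D D' : Set (Fin d → ℝ), S.IsMaxCell D → S.IsMaxCell D' → D ≠ D' →
      q ∉ affineSpan ℝ (D ∩ D') := by
    intro D D' hD hD' hne
    have h2 := hq (Sum.inl (D, D'))
      (Finset.inl_mem_disjSum.2 (Finset.mem_product.2 ⟨hD.1, hD'.1⟩))
    simp only [Sum.elim_inl] at h2
    rw [hA₁pos (D, D') ⟨hD, hD', hne⟩] at h2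
    exact h2
  have hq2 : ∀ D D' : Set (Fin d → ℝ), S.IsMaxCell D → S.IsMaxCell D' → D ≠ D' →
      finrank ℝ (vectorSpan ℝ (D ∩ D')) + 1 < n →
      q ∉ affineSpan ℝ (insert p (D ∩ D')) := by
    intro D D' hD hD' hne hrk
    have h2 := hq (Sum.inr (D, D'))
      (Finset.inr_mem_disjSum.2 (Finset.mem_product.2 ⟨hD.1, hD'.1⟩))
    simp only [Sum.elim_inr] at h2
    rw [hA₂pos (D, D') ⟨hD, hD', hne, hrk⟩] at h2
    exact h2
  -- the segment from p to q
  set f : ℝ → (Fin d → ℝ) := fun t => AffineMap.lineMap p q t with hf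
  have hfc : Continuous f := AffineMap.lineMap_continuous
  have hfP : ∀ t ∈ Icc (0:ℝ) 1, f t ∈ P := by
    intro t ht
    have : f t ∈ segment ℝ p q := by
      rw [segment_eq_image_lineMap]; exact ⟨t, ht, rfl⟩
    exact hPconv.segment_subset (S.cell_subset hC.1 hpC) (S.cell_subset hC'.1 hqC') this
  set B : Set ℝ := {t | t ∈ Icc (0:ℝ) 1 ∧ ∀ D, ∀ hD : S.IsMaxCell D, f t ∈ D →
      (dualGraph S).Reachable ⟨C, hC⟩ ⟨D, hD⟩} with hB
  have h0B : (0:ℝ) ∈ B := by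
    refine ⟨⟨le_refl 0, zero_le_one⟩, ?_⟩
    intro D hD hpD
    have hf0 : f 0 = p := by rw [hf]; exact AffineMap.lineMap_apply_zero p q
    rw [hf0] at hpD
    by_cases hDC : C = D
    · have : (⟨C, hC⟩ : {C : Set (Fin d → ℝ) // S.IsMaxCell C}) = ⟨D, hD⟩ := Subtype.ext hDC
      rw [← this]
    · exact absurd (subset_affineSpan ℝ (C ∩ D) ⟨hpC, hpD⟩) (hp' C D hC hD hDC)
  have hbdd : BddAbove B := ⟨1, fun t ht => ht.1.2⟩
  have hBne : B.Nonempty := ⟨0, h0B⟩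
  set τ : ℝ := sSup B with hτdef
  have hτ0 : 0 ≤ τ := le_csSup hbdd h0B
  have hτ1 : τ ≤ 1 := csSup_le hBne (fun t ht => ht.1.2)
  -- a small parameter window around τ
  set K : Set ℝ := ⋃ D ∈ {D ∈ (S.cells : Set (Set (Fin d → ℝ))) | f τ ∉ D}, f ⁻¹' D with hK
  have hKclosed : IsClosed K :=
    Set.Finite.isClosed_biUnion ((S.cells.finite_toSet).subset (sep_subset _ _))
      (fun D hD => (S.cell_closed hD.1).preimage hfc)
  have hτK : τ ∉ K := by
    intro hmem
    rw [hK, Set.mem_iUnion₂] at hmem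
    obtain ⟨D, hD, hτD⟩ := hmem
    exact hD.2 hτD
  obtain ⟨ε, hε0, hball⟩ := Metric.isOpen_iff.1 hKclosed.isOpen_compl τ hτK
  have hεprop : ∀ s : ℝ, |s - τ| < ε → ∀ D ∈ S.cells, f s ∈ D → f τ ∈ D := by
    intro s hs D hD hfsD
    by_contra hτD
    have hsK : s ∈ K := by
      rw [hK]
      exact Set.mem_biUnion (⟨hD, hτD⟩ : D ∈ {D ∈ (S.cells : Set (Set (Fin d → ℝ))) | f τ ∉ D}) hfsD
    exact (hball (by simpa [Real.dist_eq] using hs)) hsK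
  -- τ itself is in B
  have hτB : τ ∈ B := by
    refine ⟨⟨hτ0, hτ1⟩, ?_⟩
    intro D hD hfτD
    obtain ⟨t, htB, htlt⟩ := exists_lt_of_lt_csSup hBne (show τ - ε < sSup B by
      rw [← hτdef]; linarith)
    have htle : t ≤ τ := le_csSup hbdd htB
    have htdist : |t - τ| < ε := abs_lt.2 ⟨by linarith, by linarith⟩
    obtain ⟨D₀, hD₀, hmem₀⟩ := S.exists_maxCell_mem (hfP t htB.1)
    have hreach₀ : (dualGraph S).Reachable ⟨C, hC⟩ ⟨D₀, hD₀⟩ := htB.2 D₀ hD₀ hmem₀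
    have hfτD₀ : f τ ∈ D₀ := hεprop t htdist D₀ hD₀.1 hmem₀
    by_cases hDD : D₀ = D
    · have : (⟨D₀, hD₀⟩ : {C : Set (Fin d → ℝ) // S.IsMaxCell C}) = ⟨D, hD⟩ := Subtype.ext hDD
      rw [← this]
      exact hreach₀
    · have hτpos : 0 < τ := by
        rcases lt_or_eq_of_le hτ0 with h | h
        · exact h
        · exfalso
          have hf0 : f τ = p := by rw [hf, ← h]; exact AffineMap.lineMap_apply_zero p q
          rw [hf0] at hfτD₀ hfτD
          exact hp' D₀ D hD₀ hD hDD (subset_affineSpan ℝ (D₀ ∩ D) ⟨hfτD₀, hfτD⟩)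
      have hrankF : ¬ (finrank ℝ (vectorSpan ℝ (D₀ ∩ D)) + 1 < n) := by
        intro hltn
        apply hq2 D₀ D hD₀ hD hDD hltn
        have hfτmem : f τ ∈ affineSpan ℝ (insert p (D₀ ∩ D)) :=
          subset_affineSpan ℝ _ (Set.mem_insert_of_mem _ ⟨hfτD₀, hfτD⟩)
        have hpmem : p ∈ affineSpan ℝ (insert p (D₀ ∩ D)) :=
          subset_affineSpan ℝ _ (Set.mem_insert _ _)
        have hkey := AffineSubspace.smul_vsub_vadd_mem (affineSpan ℝ (insert p (D₀ ∩ D)))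
          (1/τ) hfτmem hpmem hpmem
        have heq : (1/τ) • (f τ -ᵥ p) +ᵥ p = q := by
          rw [hf]
          simp only [AffineMap.lineMap_apply_module, vsub_eq_sub, vadd_eq_add]
          have hτne : τ ≠ 0 := ne_of_gt hτpos
          match_scalars <;> field_simp <;> ring
        rwa [heq] at hkey
      have hltF : finrank ℝ (vectorSpan ℝ (D₀ ∩ D)) < n := hinterlt D₀ D hD₀ hD hDD
      have hEqF : finrank ℝ (vectorSpan ℝ (D₀ ∩ D)) + 1 = n := by omega
      have hAdj : (dualGraph S).Adj ⟨D₀, hD₀⟩ ⟨D, hD⟩ := by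
        show dualAdj S D₀ D
        refine ⟨hDD, ⟨S.faceToFace D₀ hD₀.1 D hD.1, by rw [hrank D₀ hD₀]; exact hEqF⟩,
          ⟨?_, by rw [hrank D hD]; exact hEqF⟩⟩
        have := S.faceToFace D hD.1 D₀ hD₀.1
        rwa [Set.inter_comm] at this
      exact hreach₀.trans hAdj.reachable
  -- τ must be 1
  have hτeq1 : τ = 1 := by
    by_contra hne1
    have hτlt : τ < 1 := lt_of_le_of_ne hτ1 hne1
    set s : ℝ := min 1 (τ + ε/2) with hs
    have hτs : τ < s := lt_min hτlt (by linarith)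
    have hsB : s ∈ B := by
      refine ⟨⟨le_trans hτ0 (le_of_lt hτs), min_le_left _ _⟩, ?_⟩
      intro D hD hfsD
      have hdist : |s - τ| < ε := abs_lt.2 ⟨by linarith, by
        have : s ≤ τ + ε/2 := min_le_right _ _
        linarith⟩
      exact hτB.2 D hD (hεprop s hdist D hD.1 hfsD)
    have : s ≤ τ := le_csSup hbdd hsB
    linarith
  -- conclude
  have h1B : (1:ℝ) ∈ B := hτeq1 ▸ hτB
  have hf1 : f 1 = q := by rw [hf]; exact AffineMap.lineMap_apply_one p q
  exact h1B.2 C' hC' (hf1 ▸ hqC')
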